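/- Let G = (V, E) be a finite DAG and let s be a vertex with no incoming edges. Let a : V → ℝ be prescribed target values with a(s) = 1, and suppose that every vertex v ≠ s has at least one incoming edge e with a(tail(e)) ≠ 0. Then there exists a weight function W : E → ℝ such that the node path-sum α_v(W) equals a(v) for every vertex v. -/
import Mathlib


/-- `IsPathFrom tail head u v p` means the list of edges `p` is a directed path
from vertex `u` to vertex `v`. The empty path goes from `u` to `u`. -/
def IsPathFrom {V E : Type} (tail head : E → V) : V → V → List E → Prop
  | u, v, [] => u = v
  | u, v, e :: es => tail e = u ∧ IsPathFrom tail head (head e) v es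

/-- A directed graph is acyclic if the only directed path from a vertex to itself
is the empty path. -/
def Acyclic {V E : Type} (tail head : E → V) : Prop :=
  ∀ (v : V) (p : List E), IsPathFrom tail head v v p → p = []

/-- The weight of a path is the product of the weights of its edges. -/
def pathWeight {E : Type} (W : E → ℝ) (p : List E) : ℝ := (p.map W).prod

/-- The node path-sum `α_v(W)`: the sum of the weights of all directed paths from the
source `s` to `v`.  (In an acyclic graph the only path from `s` to `s` is the empty
path, so `α_s(W) = 1`.) -/
noncomputable def nodeAlpha {V E : Type} (tail head : E → V) (W : E → ℝ) (s v : V) : ℝ :=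
  ∑ᶠ p ∈ {p : List E | IsPathFrom tail head s v p}, pathWeight W p

section Aux
variable {V E : Type} (tail head : E → V)

lemma isPathFrom_append {u w v : V} {p q : List E}
    (hp : IsPathFrom tail head u w p) (hq : IsPathFrom tail head w v q) :
    IsPathFrom tail head u v (p ++ q) := by
  induction p generalizing u with
  | nil => cases hp; simpa using hq
  | cons e es ih => exact ⟨hp.1, ih hp.2⟩

lemma isPathFrom_split {u v : V} {p q : List E}
    (h : IsPathFrom tail head u v (p ++ q)) :
    ∃ w, IsPathFrom tail head u w p ∧ IsPathFrom tail head w v q := by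
  induction p generalizing u with
  | nil => exact ⟨u, rfl, by simpa using h⟩
  | cons e es ih =>
    obtain ⟨w, h1, h2⟩ := ih h.2
    exact ⟨w, ⟨h.1, h1⟩, h2⟩

lemma nodup_of_isPathFrom (hacyc : Acyclic tail head) {u v : V} {p : List E}
    (hp : IsPathFrom tail head u v p) : p.Nodup := by
  induction p generalizing u with
  | nil => exact List.nodup_nil
  | cons e es ih =>
    refine List.nodup_cons.2 ⟨fun hmem => ?_, ih hp.2⟩
    obtain ⟨l1, l2, hl⟩ := List.append_of_mem hmem
    rw [hl] at hp
    obtain ⟨w, h1, h2⟩ := isPathFrom_split tail head hp.2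
    have : IsPathFrom tail head (tail e) (tail e) (e :: l1) := ⟨rfl, h2.1 ▸ h1⟩
    simpa using hacyc _ _ this

lemma finite_paths [Fintype E] (hacyc : Acyclic tail head) (u v : V) :
    {p : List E | IsPathFrom tail head u v p}.Finite := by
  apply Set.Finite.subset (List.finite_length_le E (Fintype.card E))
  intro p hp
  exact (nodup_of_isPathFrom tail head hacyc hp).length_le_card

lemma nodeAlpha_recursion [Fintype E] [DecidableEq V] (hacyc : Acyclic tail head)
    (W : E → ℝ) (s v : V) (hv : v ≠ s) :
    nodeAlpha tail head W s v =
      ∑ e ∈ Finset.univ.filter (fun e => head e = v),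
        nodeAlpha tail head W s (tail e) * W e := by
  classical
  have hfin := finite_paths tail head hacyc s
  have hterm : ∀ u, nodeAlpha tail head W s u = ∑ q ∈ (hfin u).toFinset, pathWeight W q := by
    intro u
    rw [nodeAlpha, ← finsum_mem_coe_finset, Set.Finite.coe_toFinset]
  simp_rw [hterm]
  simp_rw [Finset.sum_mul]
  rw [Finset.sum_sigma']
  have hne : ∀ p ∈ (hfin v).toFinset, p ≠ [] := by
    intro p hp h
    rw [Set.Finite.mem_toFinset] at hp
    subst h
    exact hv hp.symm
  refine (Finset.sum_bij' (fun x _ => x.2 ++ [x.1])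
    (fun p hp => ⟨p.getLast (hne p hp), p.dropLast⟩) ?_ ?_ ?_ ?_ ?_).symm
  · rintro ⟨e, q⟩ hx
    simp only [Finset.mem_sigma, Finset.mem_filter, Set.Finite.mem_toFinset] at hx ⊢
    exact isPathFrom_append tail head hx.2 ⟨rfl, hx.1.2⟩
  · intro p hp
    have hp' := Set.Finite.mem_toFinset _ |>.1 hp
    have hconcat : p.dropLast ++ [p.getLast (hne p hp)] = p := List.dropLast_append_getLast _
    rw [Finset.mem_sigma, Finset.mem_filter]
    rw [← hconcat] at hp'
    obtain ⟨w, h1, h2⟩ := isPathFrom_split tail head hp'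
    obtain ⟨ht, hh⟩ := h2
    have hh' : head (p.getLast (hne p hp)) = v := hh
    refine ⟨⟨Finset.mem_univ _, hh'⟩, ?_⟩
    rw [Set.Finite.mem_toFinset]
    show IsPathFrom tail head s (tail (p.getLast (hne p hp))) p.dropLast
    rw [ht]
    exact h1
  · rintro ⟨e, q⟩ hx
    simp
  · intro p hp
    exact List.dropLast_append_getLast _
  · rintro ⟨e, q⟩ hx
    simp [pathWeight]

end Aux

lemma exists_path_of_transGen {V E : Type} (tail head : E → V) {u v : V}
    (h : Relation.TransGen (fun x y => ∃ e : E, tail e = x ∧ head e = y) u v) :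
    ∃ p : List E, p ≠ [] ∧ IsPathFrom tail head u v p := by
  induction h with
  | single h =>
    obtain ⟨e, he1, he2⟩ := h
    exact ⟨[e], by simp, ⟨he1, he2⟩⟩
  | tail h1 h2 ih =>
    obtain ⟨p, hne, hp⟩ := ih
    obtain ⟨e, he1, he2⟩ := h2
    exact ⟨p ++ [e], by simp, isPathFrom_append tail head hp ⟨he1, he2⟩⟩



/-- Existence step of the paper's Lemma 2: in a finite DAG with a source `s` having
no incoming edges, given target values `a : V → ℝ` with `a s = 1` such that every
vertex `v ≠ s` has an incoming edge whose tail has nonzero target value, there exists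
a weight function `W : E → ℝ` with node path-sums `α_v(W) = a(v)` for every vertex. -/
theorem exists_weights_realizing_nodeAlpha {V E : Type} [Fintype V] [Fintype E]
    (tail head : E → V) (hacyc : Acyclic tail head)
    (s : V) (hs : ∀ e : E, head e ≠ s)
    (a : V → ℝ) (has : a s = 1)
    (ha : ∀ v : V, v ≠ s → ∃ e : E, head e = v ∧ a (tail e) ≠ 0) :
    ∃ W : E → ℝ, ∀ v : V, nodeAlpha tail head W s v = a v := by
  classical
  choose pick hpick1 hpick2 using ha
  set W : E → ℝ := fun e => if e = pick (head e) (hs e) then a (head e) / a (tail e) else 0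
    with hW
  set r : V → V → Prop := fun x y => ∃ e : E, tail e = x ∧ head e = y with hr
  haveI : IsTrans V (Relation.TransGen r) := ⟨fun _ _ _ => Relation.TransGen.trans⟩
  haveI : IsIrrefl V (Relation.TransGen r) := by
    constructor
    intro v hv
    obtain ⟨p, hne, hp⟩ := exists_path_of_transGen tail head hv
    exact hne (hacyc v p hp)
  have wf : WellFounded (Relation.TransGen r) :=
    Finite.wellFounded_of_trans_of_irrefl _
  refine ⟨W, fun v => ?_⟩
  induction v using wf.induction with
  | _ v IH =>
    by_cases hv : v = s
    · subst hv
      have hset : {p : List E | IsPathFrom tail head v v p} = {([] : List E)} := by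
        ext p
        simp only [Set.mem_setOf_eq, Set.mem_singleton_iff]
        exact ⟨fun h => hacyc v p h, fun h => by subst h; rfl⟩
      rw [nodeAlpha, hset, finsum_mem_singleton]
      simp [pathWeight, has]
    · have hpe : ∀ (e : E) (hev : head e = v), pick (head e) (hs e) = pick v hv := by
        intro e hev
        subst hev
        rfl
      rw [nodeAlpha_recursion tail head hacyc W s v hv]
      have hcongr : ∀ e ∈ Finset.univ.filter (fun e => head e = v),
          nodeAlpha tail head W s (tail e) * W e = a (tail e) * W e := by
        intro e he
        rw [Finset.mem_filter] at he
        rw [IH (tail e) (Relation.TransGen.single ⟨e, rfl, he.2⟩)]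
      rw [Finset.sum_congr rfl hcongr]
      have he0 : pick v hv ∈ Finset.univ.filter (fun e => head e = v) := by
        rw [Finset.mem_filter]
        exact ⟨Finset.mem_univ _, hpick1 v hv⟩
      rw [Finset.sum_eq_single (pick v hv)]
      · have hWe : W (pick v hv) = a v / a (tail (pick v hv)) := by
          rw [hW]
          dsimp only
          rw [hpe _ (hpick1 v hv), if_pos rfl, hpick1 v hv]
        rw [hWe, mul_comm]
        exact div_mul_cancel₀ (a v) (hpick2 v hv)
      · intro e he hne
        rw [Finset.mem_filter] at he
        have hWe : W e = 0 := by
          rw [hW]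
          dsimp only
          rw [hpe e he.2]
          exact if_neg hne
        rw [hWe, mul_zero]
      · intro h
        exact absurd he0 h
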